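/- Let (A,≻,≺) be a dendriform algebra over a field of characteristic zero. Then (A,▷,◁) with x▷y = x≻y and x◁y = x≺y is an L-dendriform algebra. -/
import Mathlib

/-- A dendriform algebra structure: two bilinear operations `succ` (`≻`) and
`prec` (`≺`) satisfying the three dendriform identities, where `x∗y = x≺y + x≻y`. -/
def IsDendriform {K A : Type*} [Field K] [AddCommGroup A] [Module K A]
    (succ prec : A →ₗ[K] A →ₗ[K] A) : Prop :=
  (∀ x y z : A, prec (prec x y) z = prec x (prec y z + succ y z)) ∧
  (∀ x y z : A, prec (succ x y) z = succ x (prec y z)) ∧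
  (∀ x y z : A, succ x (succ y z) = succ (prec x y + succ x y) z)

/-- An L-dendriform algebra structure. -/
def IsLDendriform {K A : Type*} [Field K] [AddCommGroup A] [Module K A]
    (tr tl : A →ₗ[K] A →ₗ[K] A) : Prop :=
  (∀ x y z : A, tr x (tr y z) =
      tr (tr x y) z + tr (tl x y) z + tr y (tr x z) - tr (tl y x) z - tr (tr y x) z) ∧
  (∀ x y z : A, tr x (tl y z) =
      tl (tr x y) z + tl y (tr x z) + tl y (tl x z) - tl (tl y x) z)

/-- Any dendriform algebra `(A,≻,≺)` over a field of characteristic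
zero is an L-dendriform algebra with `x▷y = x≻y` and `x◁y = x≺y`. -/
theorem LDendriform_of_dendriform {K A : Type*} [Field K] [CharZero K]
    [AddCommGroup A] [Module K A]
    (succ prec : A →ₗ[K] A →ₗ[K] A) (h : IsDendriform succ prec) :
    IsLDendriform succ prec := by
  obtain ⟨h1, h2, h3⟩ := h
  constructor
  · intro x y z
    rw [h3 x y z, h3 y x z]
    simp only [map_add, LinearMap.add_apply]
    abel
  · intro x y z
    rw [← h2 x y z, h1 y x z]
    simp only [map_add]
    abel
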